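/- Let n be a positive integer, let d ≥ 1, and let a be an integer with 1 ≤ a ≤ C(n+d-1, d). Let a = C(k_d,d) + C(k_{d-1},d-1) + ... + C(k_2,2) + C(k_1,1) be the d-fractal decomposition of a. Then the truncation of [n]^d to its first a entries equals the concatenation [k_d-d+1]^d ⌢ [k_{d-1}-d+2]^{d-1} ⌢ ... ⌢ [k_2-1]^2 ⌢ [k_1]^1, where each block is [k_i-i+1]^i for i = d, d-1, ..., 1, with the convention that [0]^e is the empty sequence. -/

import Mathlib

/-- The expansion `[σ]` of a finite sequence of positive integers. -/
def expand (σ : List ℕ) : List ℕ := (σ.map fun a => List.range' 1 a).flatten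

/-- The conditions `k_d > k_{d-1} > … > k_2 ≥ k_1 ≥ 1` on a tuple
`(k_1,…,k_d)` (encoded as `k : Fin d → ℕ` with `k ⟨i-1,_⟩ = k_i`). -/
def FracCond (d : ℕ) (k : Fin d → ℕ) : Prop :=
  (∀ h : 0 < d, 1 ≤ k ⟨0, h⟩) ∧
  ∀ (i : ℕ) (h : i + 1 < d),
    if i = 0 then k ⟨i, Nat.lt_of_succ_lt h⟩ ≤ k ⟨i + 1, h⟩
    else k ⟨i, Nat.lt_of_succ_lt h⟩ < k ⟨i + 1, h⟩

/-- `k : Fin d → ℕ` encodes the `d`-fractal decomposition of `a`: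
`a = C(k_d,d) + C(k_{d-1},d-1) + … + C(k_2,2) + C(k_1,1)` with
`k_d > k_{d-1} > … > k_2 ≥ k_1 ≥ 1` (where `C(p,q) = 0` if `p < q`). -/
def IsFracDecomp (d a : ℕ) (k : Fin d → ℕ) : Prop :=
  FracCond d k ∧ a = ∑ i : Fin d, (k i).choose ((i : ℕ) + 1)

/-- The `d`-fractal coefficients `[a]^{(d)} = (k_d-d+2, k_{d-1}-d+3, …, k_3-1, k_2, k_1)`
of a decomposition `k`: the coefficient `c_i` (for the term `C(k_i, i)`) is
`c_1 = k_1` and `c_i = k_i - i + 2` for `i ≥ 2`; in the `Fin d` encoding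
(index `i` stands for `k_{i+1}`) this is `c ⟨i⟩ = k ⟨i⟩ + 1 - i` for `i ≥ 1`. -/
def fracCoeff (d : ℕ) (k : Fin d → ℕ) (i : Fin d) : ℕ :=
  if (i : ℕ) = 0 then k i else k i + 1 - (i : ℕ)

lemma expand_append (σ τ : List ℕ) : expand (σ ++ τ) = expand σ ++ expand τ := by
  simp [expand]

lemma expand_iter_append (e : ℕ) (σ τ : List ℕ) :
    expand^[e] (σ ++ τ) = expand^[e] σ ++ expand^[e] τ := by
  induction e generalizing σ τ with
  | zero => rfl
  | succ e ih =>
    rw [Function.iterate_succ_apply, Function.iterate_succ_apply,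
      Function.iterate_succ_apply, expand_append, ih]

lemma expand_iter_nil (e : ℕ) : expand^[e] [] = [] := by
  induction e with
  | zero => rfl
  | succ e ih => rw [Function.iterate_succ_apply]; simpa [expand] using ih

lemma expand_single (s : ℕ) : expand [s] = List.range' 1 s := by simp [expand]

lemma expand_iter_zero (e : ℕ) : expand^[e+1] [0] = [] := by
  rw [Function.iterate_succ_apply]
  simpa [expand] using expand_iter_nil e

lemma expand_single_succ (s : ℕ) : expand [s+1] = expand [s] ++ [s+1] := by
  rw [expand_single, expand_single, List.range'_concat]
  simp [Nat.add_comm]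

lemma expand_iter_succ_succ (e s : ℕ) :
    expand^[e+1] [s+1] = expand^[e+1] [s] ++ expand^[e] [s+1] := by
  rw [Function.iterate_succ_apply, Function.iterate_succ_apply,
    expand_single_succ, expand_iter_append]

lemma expand_iter_length (e : ℕ) : ∀ s, (expand^[e+1] [s]).length = (s + e).choose (e+1) := by
  induction e with
  | zero =>
    intro s
    rw [show (0:ℕ)+1 = 1 from rfl, Function.iterate_one, expand_single]
    simp
  | succ e ih =>
    intro s
    induction s with
    | zero =>
      rw [expand_iter_zero]
      simp [Nat.choose_eq_zero_of_lt]
    | succ s ihs =>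
      rw [expand_iter_succ_succ, List.length_append, ihs, ih (s+1)]
      have h1 : s + 1 + (e+1) = (s + e + 1) + 1 := by omega
      have h2 : s + (e+1) = s + e + 1 := by omega
      have h3 : s + 1 + e = s + e + 1 := by omega
      rw [h1, Nat.choose_succ_succ (s+e+1) (e+1), h2, h3, Nat.add_comm]

lemma expand_iter_prefix {s t : ℕ} (e : ℕ) (h : s ≤ t) :
    expand^[e+1] [s] <+: expand^[e+1] [t] := by
  obtain ⟨u, rfl⟩ := Nat.exists_eq_add_of_le h
  have key : expand [s + u] = expand [s] ++ List.range' (1 + 1 * s) u := by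
    rw [expand_single, expand_single, ← List.range'_append]
  rw [Function.iterate_succ_apply, Function.iterate_succ_apply, key, expand_iter_append]
  exact ⟨_, rfl⟩

lemma take_expand_iter_eq {e s t a : ℕ} (hs : a ≤ (expand^[e+1] [s]).length)
    (ht : a ≤ (expand^[e+1] [t]).length) :
    (expand^[e+1] [s]).take a = (expand^[e+1] [t]).take a := by
  rcases Nat.le_total s t with h | h
  · obtain ⟨u, hu⟩ := expand_iter_prefix e h
    rw [← hu, List.take_append_of_le_length hs]
  · obtain ⟨u, hu⟩ := expand_iter_prefix e h
    rw [← hu, List.take_append_of_le_length ht]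

lemma fracCond_castSucc {d : ℕ} {k : Fin (d+1) → ℕ} (h : FracCond (d+1) k) :
    FracCond d (fun i => k i.castSucc) := by
  obtain ⟨h1, h2⟩ := h
  refine ⟨fun hd => ?_, fun i hi => ?_⟩
  · exact h1 (Nat.succ_pos d)
  · exact h2 i (Nat.lt_succ_of_lt hi)

lemma fracCond_lb {d : ℕ} {k : Fin d → ℕ} (h : FracCond d k) :
    ∀ i : Fin d, 1 ≤ k i ∧ (i : ℕ) ≤ k i := by
  obtain ⟨h1, h2⟩ := h
  rintro ⟨i, hi⟩
  induction i with
  | zero =>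
    refine ⟨h1 (by omega), ?_⟩
    simp only [Fin.val_mk]
    omega
  | succ i ih =>
    have prev := ih (Nat.lt_of_succ_lt hi)
    have key := h2 i hi
    simp only [Fin.val_mk] at prev ⊢
    by_cases h0 : i = 0
    · subst h0
      rw [if_pos rfl] at key
      exact ⟨le_trans prev.1 key, le_trans prev.1 key⟩
    · rw [if_neg h0] at key
      omega

lemma rest_le {d : ℕ} : ∀ (k : Fin (d+2) → ℕ), FracCond (d+2) k →
    ∑ i : Fin (d+1), (k i.castSucc).choose ((i : ℕ)+1) ≤ (k (Fin.last (d+1))).choose (d+1) := by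
  induction d with
  | zero =>
    intro k hk
    have key := hk.2 0 (by omega)
    rw [if_pos rfl] at key
    simpa using key
  | succ d ih =>
    intro k hk
    rw [Fin.sum_univ_castSucc]
    have hres := ih (fun i => k i.castSucc) (fracCond_castSucc hk)
    simp only [Fin.coe_castSucc] at hres ⊢
    have hlt : k ((Fin.last (d+1)).castSucc) < k (Fin.last (d+2)) := by
      have key := hk.2 (d+1) (by omega)
      rw [if_neg (by omega)] at key
      exact key
    calc (∑ i : Fin (d+1), (k i.castSucc.castSucc).choose ((i:ℕ)+1))
          + (k ((Fin.last (d+1)).castSucc)).choose (d+1+1)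
        ≤ (k ((Fin.last (d+1)).castSucc)).choose (d+1)
          + (k ((Fin.last (d+1)).castSucc)).choose (d+2) := by
          exact Nat.add_le_add_right hres _
      _ = (k ((Fin.last (d+1)).castSucc) + 1).choose (d+2) := (Nat.choose_succ_succ _ _).symm
      _ ≤ (k (Fin.last (d+2))).choose (d+2) := Nat.choose_le_choose _ hlt

lemma finRange_concat (n : ℕ) :
    List.finRange (n+1) = (List.finRange n).map Fin.castSucc ++ [Fin.last n] := by
  apply List.ext_getElem
  · simp
  · intro i h1 h2
    rcases Nat.lt_or_ge i n with h | h
    · simp [List.getElem_append_left, List.getElem_finRange, h, Fin.castSucc, Fin.ext_iff]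
    · have : i = n := by simp at h1; omega
      subst this
      simp [List.getElem_append_right, Fin.ext_iff]

lemma aux_main : ∀ (d n a : ℕ) (k : Fin (d+1) → ℕ),
    FracCond (d+1) k → a = ∑ i : Fin (d+1), (k i).choose ((i : ℕ)+1) →
    a ≤ (n + d).choose (d+1) →
    (expand^[d+1] [n]).take a =
      ((List.finRange (d+1)).reverse.map fun i : Fin (d+1) =>
        expand^[(i : ℕ) + 1] [k i - (i : ℕ)]).flatten := by
  intro d
  induction d with
  | zero =>
    intro n a k hc ha hle
    have ha0 : a = k 0 := by simpa using ha
    have hle' : a ≤ n := by simpa using hle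
    have h1 : (expand^[0+1] [n]).take a = (expand^[0+1] [a]).take a := by
      refine take_expand_iter_eq ?_ ?_ <;> rw [expand_iter_length] <;> simpa using hle'
    rw [h1]
    have h2 : (expand^[0+1] [a]).take a = expand^[0+1] [a] := by
      apply List.take_of_length_le
      rw [expand_iter_length]
      simp
    rw [h2]
    simp [List.finRange_succ, ha0]
  | succ d ih =>
    intro n a k hc ha hle
    set K := k (Fin.last (d+1)) with hKdef
    set k' : Fin (d+1) → ℕ := fun i => k i.castSucc with hk'def
    have hc' : FracCond (d+1) k' := fracCond_castSucc hc
    set r := ∑ i : Fin (d+1), (k' i).choose ((i : ℕ)+1) with hrdef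
    have har : a = K.choose (d+2) + r := by
      rw [ha, Fin.sum_univ_castSucc]
      simp only [Fin.coe_castSucc, Fin.val_last]
      rw [Nat.add_comm]
    have hK : (d+1 : ℕ) ≤ K := by
      have := (fracCond_lb hc (Fin.last (d+1))).2
      simpa using this
    have hr : r ≤ K.choose (d+1) := by
      have := rest_le k hc
      simpa using this
    set m := K - (d+1) with hmdef
    have hm : m + (d+1) = K := Nat.sub_add_cancel hK
    have len_m : (expand^[d+1+1] [m]).length = K.choose (d+2) := by
      rw [expand_iter_length, hm]
    have haK : a ≤ (K+1).choose (d+2) := by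
      have hcc : (K+1).choose (d+2) = K.choose (d+1) + K.choose (d+2) :=
        Nat.choose_succ_succ K (d+1)
      omega
    have step1 : (expand^[d+1+1] [n]).take a = (expand^[d+1+1] [m+1]).take a := by
      refine take_expand_iter_eq ?_ ?_
      · rw [expand_iter_length]
        exact hle
      · rw [expand_iter_length]
        have hmm : m + 1 + (d+1) = K + 1 := by omega
        rw [hmm]
        exact haK
    have step3 : (expand^[d+1+1] [m+1]).take a
        = expand^[d+1+1] [m] ++ (expand^[d+1] [m+1]).take r := by
      rw [expand_iter_succ_succ, har, ← len_m, List.take_append]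
      simp
    have hrle : r ≤ (m + 1 + d).choose (d+1) := by
      have : m + 1 + d = K := by omega
      rw [this]; exact hr
    have ihres := ih (m+1) r k' hc' rfl hrle
    have rhs : ((List.finRange (d+2)).reverse.map fun i : Fin (d+2) =>
        expand^[(i : ℕ) + 1] [k i - (i : ℕ)]).flatten
        = expand^[d+1+1] [m] ++ ((List.finRange (d+1)).reverse.map fun i : Fin (d+1) =>
            expand^[(i : ℕ) + 1] [k' i - (i : ℕ)]).flatten := by
      rw [finRange_concat (d+1)]
      simp only [List.reverse_append, List.reverse_singleton, List.map_reverse,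
        List.map_map, List.map_cons, List.map_nil, List.singleton_append,
        List.map_cons, List.flatten_cons]
      congr 2
    rw [step1, step3, ihres, rhs]

/-- Let `1 ≤ a ≤ C(n+d-1, d)` and let `a = C(k_d,d) + … + C(k_2,2) + C(k_1,1)` be the
`d`-fractal decomposition of `a`.  Then the truncation of `[n]^d` to its first `a`
entries is the concatenation `[k_d-d+1]^d ⌢ [k_{d-1}-d+2]^{d-1} ⌢ … ⌢ [k_2-1]^2 ⌢ [k_1]^1`,
i.e. the blocks are `[k_i - i + 1]^i` for `i = d, d-1, …, 1` (with `[0]^e` the empty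
sequence).  In the `Fin d` encoding, the block for index `i` is
`expand^[i+1] [k i - i]` (note `k i - i = k_{i+1} - (i+1) + 1`), taken in decreasing
order of `i`.  Here `[s]^e = expand^[e] [s]`. -/
theorem take_iterated_expansion_eq_blocks (n d a : ℕ) (hn : 0 < n) (hd : 0 < d)
    (ha : 0 < a) (hle : a ≤ (n + d - 1).choose d)
    (k : Fin d → ℕ) (hk : IsFracDecomp d a k) :
    (expand^[d] [n]).take a =
      ((List.finRange d).reverse.map fun i : Fin d =>
        expand^[(i : ℕ) + 1] [k i - (i : ℕ)]).flatten := by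
  obtain ⟨d, rfl⟩ : ∃ d', d = d' + 1 := ⟨d - 1, by omega⟩
  exact aux_main d n a k hk.1 hk.2 (by simpa [show n + (d+1) - 1 = n + d by omega] using hle)
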